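/- Let M be a compact surface with first Betti number l ≥ 3, and let f : M → M be a homeomorphism inducing f₊ on H₁(M; ℝ) whose eigenvalues all have absolute value 1. Then there are infinitely many positive integers n with Lefschetz number L(fⁿ) < 0, where L(fⁿ) = 2 − tr(f₊ⁿ) in the closed orientable case and L(fⁿ) = 1 − tr(f₊ⁿ) in the case with boundary or non-orientable case; consequently f has a periodic point. -/

import Mathlib

open Matrix Polynomial


lemma eval_charpoly' {m : ℕ} (M : Matrix (Fin m) (Fin m) ℂ) (r : ℂ) :
    M.charpoly.eval r = (scalar (Fin m) r - M).det := by
  rw [Matrix.charpoly, eval_det, matPolyEquiv_charmatrix]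
  simp

lemma det_aeval_multiset_prod {m : ℕ} (B : Matrix (Fin m) (Fin m) ℂ) (s : Multiset ℂ[X]) :
    ((aeval B) s.prod).det = (s.map fun q => ((aeval B) q).det).prod := by
  induction s using Multiset.induction with
  | empty => simp
  | cons a s ih => simp [Multiset.prod_cons, _root_.map_mul, det_mul, ih]

lemma det_sub_scalar {m : ℕ} (B : Matrix (Fin m) (Fin m) ℂ) (μ : Fin m → ℂ)
    (hB : B.charpoly = ∏ i, (X - C (μ i))) (r : ℂ) :
    (B - scalar (Fin m) r).det = ∏ i, (μ i - r) := by
  have h1 : B - scalar (Fin m) r = (-1 : ℂ) • (scalar (Fin m) r - B) := by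
    simp [neg_sub]
  rw [h1, det_smul, ← eval_charpoly' B r, hB]
  rw [eval_prod]
  simp only [eval_sub, eval_X, eval_C]
  have : ∀ i : Fin m, μ i - r = (-1) * (r - μ i) := fun i => by ring
  simp only [this, Finset.prod_mul_distrib, Finset.prod_const, Finset.card_univ,
    Fintype.card_fin]

example : True := trivial

lemma multiset_prod_finset_prod {m : ℕ} (s : Multiset ℂ) (f : Fin m → ℂ → ℂ) :
    (s.map fun a => ∏ i, f i a).prod = ∏ i, (s.map (f i)).prod := by
  induction s using Multiset.induction with
  | empty => simp
  | cons a s ih => simp [Finset.prod_mul_distrib, ih]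

lemma det_aeval_eq_prod {m : ℕ} (B : Matrix (Fin m) (Fin m) ℂ) (μ : Fin m → ℂ)
    (hB : B.charpoly = ∏ i, (X - C (μ i))) (p : ℂ[X]) :
    ((aeval B) p).det = ∏ i, p.eval (μ i) := by
  rcases eq_or_ne p 0 with rfl | hp
  · rcases Nat.eq_zero_or_pos m with rfl | hm
    · simp [Matrix.det_fin_zero]
    · have : Nonempty (Fin m) := ⟨⟨0, hm⟩⟩
      simp [zero_pow hm.ne']
  · have hsplit : p.Splits := IsAlgClosed.splits p
    have hfac := hsplit.eq_prod_roots
    calc ((aeval B) p).det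
        = ((aeval B) (C p.leadingCoeff * (Multiset.map (fun a => X - C a) p.roots).prod)).det := by
          rw [← hfac]
      _ = (p.leadingCoeff ^ m) *
            ((Multiset.map (fun a => X - C a) p.roots).map fun q => ((aeval B) q).det).prod := by
          rw [_root_.map_mul, det_mul, det_aeval_multiset_prod]
          congr 1
          · simp [aeval_C, Algebra.algebraMap_eq_smul_one, det_smul, Fintype.card_fin]
      _ = (p.leadingCoeff ^ m) * (p.roots.map fun a => ∏ i, (μ i - a)).prod := by
          rw [Multiset.map_map]
          congr 1
          apply congr_arg
          apply Multiset.map_congr rfl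
          intro a _
          have : (aeval B) (X - C a) = B - scalar (Fin m) a := by
            rw [map_sub, aeval_X, aeval_C]
            rfl
          rw [Function.comp_apply, this, det_sub_scalar B μ hB]
      _ = (p.leadingCoeff ^ m) * ∏ i, (p.roots.map fun a => (μ i - a)).prod := by
          congr 1
          exact multiset_prod_finset_prod p.roots (fun i a => μ i - a)
      _ = ∏ i, p.eval (μ i) := by
          have hev : ∀ x : ℂ, p.eval x = p.leadingCoeff * (p.roots.map fun a => (x - a)).prod := by
            intro x
            conv_lhs => rw [hfac]
            rw [eval_mul, eval_C, eval_multiset_prod, Multiset.map_map]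
            congr 2
            apply Multiset.map_congr rfl
            intro a _
            simp
          simp only [hev, Finset.prod_mul_distrib, Finset.prod_const, Finset.card_univ,
            Fintype.card_fin]

lemma charpoly_pow {m : ℕ} (B : Matrix (Fin m) (Fin m) ℂ) (μ : Fin m → ℂ)
    (hB : B.charpoly = ∏ i, (X - C (μ i))) (n : ℕ) :
    (B ^ n).charpoly = ∏ i, (X - C (μ i ^ n)) := by
  apply eq_of_infinite_eval_eq
  apply Set.infinite_of_injective_forall_mem (f := fun x : ℂ => x)
  case hi => exact fun a b h => h
  intro x
  show (B ^ n).charpoly.eval x = _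
  have h1 : B ^ n - scalar (Fin m) x = (aeval B) (X ^ n - C x) := by
    rw [map_sub, map_pow, aeval_X, aeval_C]; rfl
  rw [eval_charpoly', show scalar (Fin m) x - B ^ n = (-1 : ℂ) • (B ^ n - scalar (Fin m) x) by
      simp [neg_sub],
    det_smul, h1, det_aeval_eq_prod B μ hB, eval_prod]
  simp only [eval_sub, eval_pow, eval_X, eval_C, Fintype.card_fin]
  have : ∀ i : Fin m, x - μ i ^ n = (-1) * (μ i ^ n - x) := fun i => by ring
  simp only [this, Finset.prod_mul_distrib, Finset.prod_const, Finset.card_univ, Fintype.card_fin]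

lemma trace_pow_eq {l : ℕ} (A : Matrix (Fin l) (Fin l) ℝ) (lam : Fin l → ℂ)
    (hchar : (A.map (algebraMap ℝ ℂ)).charpoly = ∏ i, (X - C (lam i))) (n : ℕ) :
    ((A ^ n).trace : ℂ) = ∑ i, lam i ^ n := by
  have hmap : (A.map (algebraMap ℝ ℂ)) ^ n = (A ^ n).map (algebraMap ℝ ℂ) := by
    have := map_pow ((algebraMap ℝ ℂ).mapMatrix :
      Matrix (Fin l) (Fin l) ℝ →+* Matrix (Fin l) (Fin l) ℂ) A n
    simpa [RingHom.mapMatrix_apply] using this.symm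
  have htr : ((A ^ n).map (algebraMap ℝ ℂ)).trace = ((A ^ n).trace : ℂ) := by
    simp [Matrix.trace, Matrix.map_apply, Matrix.diag]
  have hcp := charpoly_pow (A.map (algebraMap ℝ ℂ)) lam hchar n
  rw [hmap] at hcp
  have h2 : ((A ^ n).map (algebraMap ℝ ℂ)).trace =
      ((A ^ n).map (algebraMap ℝ ℂ)).charpoly.roots.sum :=
    Matrix.trace_eq_sum_roots_charpoly _
  rw [htr, hcp] at h2
  rw [h2]
  have : (∏ i, (X - C (lam i ^ n))) =
      ((Finset.univ.val.map fun i => lam i ^ n).map fun c => X - C c).prod := by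
    rw [Multiset.map_map]
    rfl
  rw [this, roots_multiset_prod_X_sub_C]
  simp [Finset.sum]

lemma recurrence_lemma {l : ℕ} (lam : Fin l → ℂ) (habs : ∀ i, ‖lam i‖ = 1) (N : ℕ) :
    ∃ n : ℕ, N < n ∧ ∀ i, ‖lam i ^ n - 1‖ < 1/3 := by
  set v : ℕ → (Fin l → ℂ) := fun n i => lam i ^ n with hv
  have hmem : ∀ n, v n ∈ Metric.closedBall (0 : Fin l → ℂ) 1 := by
    intro n
    rw [Metric.mem_closedBall, dist_zero_right]
    refine (pi_norm_le_iff_of_nonneg zero_le_one).2 fun i => ?_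
    rw [norm_pow, habs i, one_pow]
  obtain ⟨a, -, φ, hφ, htd⟩ :=
    (isCompact_closedBall (0 : Fin l → ℂ) 1).tendsto_subseq hmem
  obtain ⟨j₀, hj₀⟩ := (Metric.tendsto_atTop.mp htd) (1/6) (by norm_num)
  set j := max j₀ (φ j₀ + N + 1) with hj
  have h1 : dist (v (φ j)) a < 1/6 := hj₀ j (le_max_left _ _)
  have h2 : dist (v (φ j₀)) a < 1/6 := hj₀ j₀ le_rfl
  have hle : φ j₀ + N + 1 ≤ φ j := le_trans (le_max_right _ _) hφ.le_apply
  refine ⟨φ j - φ j₀, by omega, fun i => ?_⟩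
  have hd : dist (v (φ j)) (v (φ j₀)) < 1/3 := by
    calc dist (v (φ j)) (v (φ j₀)) ≤ dist (v (φ j)) a + dist (v (φ j₀)) a := dist_triangle_right _ _ _
    _ < 1/6 + 1/6 := by linarith
    _ = 1/3 := by norm_num
  have hdi : dist (v (φ j) i) (v (φ j₀) i) < 1/3 := lt_of_le_of_lt (dist_le_pi_dist _ _ i) hd
  rw [Complex.dist_eq] at hdi
  have hsplit : lam i ^ (φ j) - lam i ^ (φ j₀) = lam i ^ (φ j₀) * (lam i ^ (φ j - φ j₀) - 1) := by
    rw [mul_sub, mul_one, ← pow_add]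
    congr 2
    omega
  rwa [hsplit, norm_mul, norm_pow, habs i, one_pow, one_mul] at hdi


/-- Let `M` be a compact surface with first Betti number `l ≥ 3` and `f` a
homeomorphism of `M` whose induced map on `H₁(M; ℝ)` is represented by a matrix `A` all of
whose complex eigenvalues have absolute value 1. With Lefschetz numbers
`L n = 2 - tr (A ^ n)` (closed orientable case) or `L n = 1 - tr (A ^ n)` (boundary or
non-orientable case), and assuming the Lefschetz fixed point theorem for the iterates of `f`,
there are infinitely many `n > 0` with `L n < 0`, and `f` has a periodic point. -/
theorem infinitely_many_negative_lefschetz_and_periodic_point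
    (M : Type*) [TopologicalSpace M] [CompactSpace M]
    (f : M ≃ₜ M)
    (l : ℕ) (hl : 3 ≤ l)
    (A : Matrix (Fin l) (Fin l) ℝ)
    (lam : Fin l → ℂ)
    (hchar : (A.map (algebraMap ℝ ℂ)).charpoly = ∏ i, (X - C (lam i)))
    (habs : ∀ i, ‖lam i‖ = 1)
    (L : ℕ → ℝ)
    (hL : (∀ n, L n = 2 - (A ^ n).trace) ∨ (∀ n, L n = 1 - (A ^ n).trace))
    (hLefschetz : ∀ n : ℕ, 0 < n → L n ≠ 0 → ∃ x : M, f^[n] x = x) :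
    {n : ℕ | 0 < n ∧ L n < 0}.Infinite ∧ ∃ (x : M) (n : ℕ), 0 < n ∧ f^[n] x = x := by
  have key : ∀ N : ℕ, ∃ n : ℕ, N < n ∧ L n < 0 := by
    intro N
    obtain ⟨n, hn, hclose⟩ := recurrence_lemma lam habs N
    have htr : (A ^ n).trace = ∑ i, (lam i ^ n).re := by
      have h := trace_pow_eq A lam hchar n
      have := congrArg Complex.re h
      simpa [Complex.ofReal_re] using this
    have hre : ∀ i, (2:ℝ)/3 < (lam i ^ n).re := by
      intro i
      have h1 : -‖lam i ^ n - 1‖ ≤ (lam i ^ n - 1).re :=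
        (abs_le.mp (Complex.abs_re_le_norm _)).1
      have h2 : (lam i ^ n - 1).re = (lam i ^ n).re - 1 := by simp
      have := hclose i
      rw [h2] at h1
      linarith
    have hsum : (2:ℝ) < (A ^ n).trace := by
      rw [htr]
      have hlt : ∑ _i : Fin l, (2:ℝ)/3 < ∑ i, (lam i ^ n).re :=
        Finset.sum_lt_sum_of_nonempty
          (Finset.univ_nonempty_iff.2 ⟨⟨0, by omega⟩⟩) fun i _ => hre i
      have hconst : ∑ _i : Fin l, (2:ℝ)/3 = l * (2/3) := by
        rw [Finset.sum_const, Finset.card_univ, Fintype.card_fin, nsmul_eq_mul]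
      have hl' : (3:ℝ) ≤ l := by exact_mod_cast hl
      rw [hconst] at hlt
      nlinarith
    refine ⟨n, hn, ?_⟩
    rcases hL with h | h <;> rw [h n] <;> linarith
  constructor
  · apply Set.infinite_of_forall_exists_gt
    intro a
    obtain ⟨n, hn, hneg⟩ := key a
    exact ⟨n, ⟨by omega, hneg⟩, hn⟩
  · obtain ⟨n, hn, hneg⟩ := key 0
    obtain ⟨x, hx⟩ := hLefschetz n hn (by linarith)
    exact ⟨x, n, hn, hx⟩
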